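/- An element α of the triangle Δ^{(n)}{a,b,c} lying in its interior (i.e., taking all three values a, b, c) is idempotent (α∘α = α) if and only if a, b, c are all fixed points of α, and in that case α is a right identity of the triangle: β·α = α∘β = β for all β ∈ Δ^{(n)}{a,b,c}. -/
import Mathlib


/-- An interior element `α` of the triangle `Δ^{(n)}{a,b,c}` (image exactly
`{a,b,c}`) is idempotent iff `a`, `b`, `c` are fixed points of `α`, and in that case `α` is a
right identity: `α ∘ β = β` for all `β` in the triangle. -/
theorem stmt17 (n : ℕ) (a b c : Fin n) (hab : a < b) (hbc : b < c)
    (α : Fin n → Fin n) (hm : Monotone α) (hr : Set.range α = {a, b, c}) :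
    (α ∘ α = α ↔ (α a = a ∧ α b = b ∧ α c = c)) ∧
    (α ∘ α = α →
      ∀ β : Fin n → Fin n, Monotone β → Set.range β ⊆ {a, b, c} → α ∘ β = β) := by
  have fix : α ∘ α = α → ∀ y : Fin n, y ∈ ({a, b, c} : Set (Fin n)) → α y = y := by
    intro h y hy
    rw [← hr] at hy
    obtain ⟨x, rfl⟩ := hy
    exact congrFun h x
  constructor
  · constructor
    · intro h
      exact ⟨fix h a (by simp), fix h b (by simp), fix h c (by simp)⟩
    · rintro ⟨ha, hb, hc⟩
      funext x
      have : α x ∈ ({a, b, c} : Set (Fin n)) := hr ▸ Set.mem_range_self x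
      simp only [Set.mem_insert_iff, Set.mem_singleton_iff] at this
      rcases this with h | h | h <;> simp [Function.comp, h, ha, hb, hc]
  · intro h β _ hβ
    funext x
    exact fix h (β x) (hβ (Set.mem_range_self x))
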